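/- With H, J_± the (2n+1)×(2n+1) matrices realizing the superprincipal osp(1|2) embedding (H = diag(n,...,-n); J_- the subdiagonal of 1's; J_+ the superdiagonal with entries n, -1, n-1, -2, ..., -n), set X_± = J_±². Then [H, X_±] = ±2X_±, [X_+, X_-] = -H, [J_-, X_+] = J_+, and [J_+, X_-] = -J_-. -/

import Mathlib

open Matrix

variable (n : ℕ)

/-- `J₋`: the (2n+1)×(2n+1) matrix with 1's on the subdiagonal. -/
def Jminus : Matrix (Fin (2 * n + 1)) (Fin (2 * n + 1)) ℚ :=
  fun i j => if (i : ℕ) = (j : ℕ) + 1 then 1 else 0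

/-- `H`: the diagonal matrix with diagonal entries n, n-1, ..., 0, ..., -n. -/
def Hmat : Matrix (Fin (2 * n + 1)) (Fin (2 * n + 1)) ℚ :=
  fun i j => if i = j then (n : ℚ) - (i : ℕ) else 0

/-- `J₊`: the matrix with superdiagonal entries n, -1, n-1, -2, ..., -n;
in 1-based indexing, (J₊)_{2j-1,2j} = n-j+1 and (J₊)_{2j,2j+1} = -j. -/
def Jplus : Matrix (Fin (2 * n + 1)) (Fin (2 * n + 1)) ℚ :=
  fun i j => if (j : ℕ) = (i : ℕ) + 1 then
    (if (i : ℕ) % 2 = 0 then (n : ℚ) - ((i : ℕ) / 2 : ℕ) else -((((i : ℕ) + 1) / 2 : ℕ) : ℚ))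
  else 0

/-- `M₁`: the matrix with superdiagonal entries n, 1, n-1, 2, ..., n;
in 1-based indexing, (M₁)_{2j-1,2j} = n-j+1 and (M₁)_{2j,2j+1} = j. -/
def Mone : Matrix (Fin (2 * n + 1)) (Fin (2 * n + 1)) ℚ :=
  fun i j => if (j : ℕ) = (i : ℕ) + 1 then
    (if (i : ℕ) % 2 = 0 then (n : ℚ) - ((i : ℕ) / 2 : ℕ) else ((((i : ℕ) + 1) / 2 : ℕ) : ℚ))
  else 0

/-- With X_± = J_±², the relations [H, X_±] = ±2X_±, [X₊, X₋] = -H,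
[J₋, X₊] = J₊ and [J₊, X₋] = -J₋ hold. -/
def ap (n i : ℕ) : ℚ :=
  if i % 2 = 0 then (n : ℚ) - ((i / 2 : ℕ) : ℚ) else -(((i + 1) / 2 : ℕ) : ℚ)

lemma Jplus_apply (n : ℕ) (i j : Fin (2*n+1)) :
    Jplus n i j = if (j : ℕ) = (i : ℕ) + 1 then ap n (i : ℕ) else 0 := rfl

lemma Jminus_apply (n : ℕ) (i j : Fin (2*n+1)) :
    Jminus n i j = if (i : ℕ) = (j : ℕ) + 1 then 1 else 0 := rfl

lemma Hmat_eq (n : ℕ) : Hmat n = Matrix.diagonal (fun i : Fin (2*n+1) => (n : ℚ) - (i : ℕ)) := rfl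

lemma sum_coe {m : ℕ} (f : Fin m → ℚ) (t : ℕ)
    (h0 : ∀ k : Fin m, (k : ℕ) ≠ t → f k = 0) :
    ∑ k, f k = if ht : t < m then f ⟨t, ht⟩ else 0 := by
  split_ifs with ht
  · refine Finset.sum_eq_single_of_mem ⟨t, ht⟩ (Finset.mem_univ _) fun k _ hk => h0 k ?_
    simpa [Fin.ext_iff] using hk
  · exact Finset.sum_eq_zero fun k _ => h0 k (by have := k.isLt; omega)

lemma ap_even (n t : ℕ) : ap n (2*t) = (n : ℚ) - t := by
  have h1 : 2*t % 2 = 0 := by omega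
  have h2 : 2*t / 2 = t := by omega
  simp [ap, h1, h2]

lemma ap_odd (n t : ℕ) : ap n (2*t+1) = -((t : ℚ) + 1) := by
  have h1 : (2*t+1) % 2 = 1 := by omega
  have h2 : (2*t+1+1) / 2 = t+1 := by omega
  rw [ap, if_neg (by omega), h2]
  push_cast; ring

lemma Xp_apply (n : ℕ) (i j : Fin (2*n+1)) :
    ((Jplus n)^2) i j = if (j : ℕ) = (i : ℕ) + 2 then ap n i * ap n ((i:ℕ)+1) else 0 := by
  rw [pow_two, mul_apply]
  rw [sum_coe _ ((i:ℕ)+1) (fun k hk => by simp [Jplus_apply, hk])]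
  split_ifs <;> simp_all [Jplus_apply] <;> (try omega) <;> (have := j.isLt; omega)

lemma Xm_apply (n : ℕ) (i j : Fin (2*n+1)) :
    ((Jminus n)^2) i j = if (i : ℕ) = (j : ℕ) + 2 then 1 else 0 := by
  rw [pow_two, mul_apply]
  rw [sum_coe _ ((j:ℕ)+1) (fun k hk => by
    by_cases h : (k:ℕ) = (j:ℕ)+1
    · omega
    · simp [Jminus_apply, h])]
  split_ifs <;> simp_all [Jminus_apply] <;> (try omega) <;> (have := i.isLt; omega)

lemma XpXm_apply (n : ℕ) (i j : Fin (2*n+1)) :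
    ((Jplus n)^2 * (Jminus n)^2) i j =
      if ((i:ℕ) = (j:ℕ) ∧ (i:ℕ) + 2 ≤ 2*n) then ap n i * ap n ((i:ℕ)+1) else 0 := by
  rw [mul_apply]
  rw [sum_coe _ ((i:ℕ)+2) (fun k hk => by
    rw [Xp_apply, if_neg (by omega), zero_mul])]
  split_ifs <;> simp_all [Xp_apply, Xm_apply] <;> omega

lemma XmXp_apply (n : ℕ) (i j : Fin (2*n+1)) :
    ((Jminus n)^2 * (Jplus n)^2) i j =
      if ((i:ℕ) = (j:ℕ) ∧ 2 ≤ (i:ℕ)) then ap n ((i:ℕ)-2) * ap n ((i:ℕ)-1) else 0 := by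
  rw [mul_apply]
  rw [sum_coe _ ((i:ℕ)-2) (fun k hk => by
    rw [Xm_apply]
    by_cases h : (i:ℕ) = (k:ℕ)+2
    · omega
    · rw [if_neg h, zero_mul])]
  have hi := i.isLt
  rw [dif_pos (by omega), Xm_apply, Xp_apply]
  simp only [Fin.val_mk]
  rcases Nat.lt_or_ge (i:ℕ) 2 with h2 | h2
  · rw [if_neg (by omega), zero_mul, if_neg (by omega)]
  · rw [if_pos (by omega), one_mul]
    have e : (i:ℕ) - 2 + 2 = (i:ℕ) := by omega
    have e1 : (i:ℕ) - 2 + 1 = (i:ℕ) - 1 := by omega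
    rw [e, e1]
    split_ifs <;> first | rfl | omega

lemma JmXp_apply (n : ℕ) (i j : Fin (2*n+1)) :
    (Jminus n * (Jplus n)^2) i j =
      if ((j:ℕ) = (i:ℕ)+1 ∧ 1 ≤ (i:ℕ)) then ap n ((i:ℕ)-1) * ap n (i:ℕ) else 0 := by
  rw [mul_apply]
  rw [sum_coe _ ((i:ℕ)-1) (fun k hk => by
    rw [Jminus_apply]
    by_cases h : (i:ℕ) = (k:ℕ)+1
    · omega
    · rw [if_neg h, zero_mul])]
  have hi := i.isLt
  rw [dif_pos (by omega), Jminus_apply, Xp_apply]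
  simp only [Fin.val_mk]
  rcases Nat.lt_or_ge (i:ℕ) 1 with h2 | h2
  · rw [if_neg (by omega), zero_mul, if_neg (by omega)]
  · rw [if_pos (by omega), one_mul]
    have e : (i:ℕ) - 1 + 2 = (i:ℕ) + 1 := by omega
    have e1 : (i:ℕ) - 1 + 1 = (i:ℕ) := by omega
    rw [e, e1]
    split_ifs <;> first | rfl | omega

lemma XpJm_apply (n : ℕ) (i j : Fin (2*n+1)) :
    ((Jplus n)^2 * Jminus n) i j =
      if ((j:ℕ) = (i:ℕ)+1 ∧ (i:ℕ)+2 ≤ 2*n) then ap n i * ap n ((i:ℕ)+1) else 0 := by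
  rw [mul_apply]
  rw [sum_coe _ ((i:ℕ)+2) (fun k hk => by rw [Xp_apply, if_neg (by omega), zero_mul])]
  split_ifs <;> simp_all [Xp_apply, Jminus_apply] <;> omega

lemma JpXm_apply (n : ℕ) (i j : Fin (2*n+1)) :
    (Jplus n * (Jminus n)^2) i j =
      if ((i:ℕ) = (j:ℕ)+1 ∧ (i:ℕ)+1 ≤ 2*n) then ap n i else 0 := by
  rw [mul_apply]
  rw [sum_coe _ ((i:ℕ)+1) (fun k hk => by rw [Jplus_apply, if_neg (by omega), zero_mul])]
  split_ifs <;> simp_all [Jplus_apply, Xm_apply] <;> omega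

lemma XmJp_apply (n : ℕ) (i j : Fin (2*n+1)) :
    ((Jminus n)^2 * Jplus n) i j =
      if ((i:ℕ) = (j:ℕ)+1 ∧ 2 ≤ (i:ℕ)) then ap n ((i:ℕ)-2) else 0 := by
  rw [mul_apply]
  rw [sum_coe _ ((i:ℕ)-2) (fun k hk => by
    rw [Xm_apply]
    by_cases h : (i:ℕ) = (k:ℕ)+2
    · omega
    · rw [if_neg h, zero_mul])]
  have hi := i.isLt
  rw [dif_pos (by omega), Xm_apply, Jplus_apply]
  simp only [Fin.val_mk]
  rcases Nat.lt_or_ge (i:ℕ) 2 with h2 | h2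
  · rw [if_neg (by omega), zero_mul, if_neg (by omega)]
  · rw [if_pos (by omega), one_mul]
    have e : (i:ℕ) - 2 + 1 = (i:ℕ) - 1 := by omega
    rw [e]
    split_ifs <;> first | rfl | omega


lemma key3 (n i : ℕ) (hn : 1 ≤ n) (hi : i ≤ 2*n) :
    (if i + 2 ≤ 2*n then ap n i * ap n (i+1) else 0)
      - (if 2 ≤ i then ap n (i-2) * ap n (i-1) else 0) = (i:ℚ) - n := by
  rcases Nat.even_or_odd i with ⟨t, rfl⟩ | ⟨t, rfl⟩
  · have ht : t + t = 2 * t := by ring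
    rw [ht]
    by_cases h1 : t + 1 ≤ n
    · rw [if_pos (by omega), ap_even, ap_odd]
      by_cases h2 : 2 ≤ 2*t
      · obtain ⟨s, rfl⟩ : ∃ s, t = s + 1 := ⟨t-1, by omega⟩
        rw [if_pos (by omega), show 2*(s+1)-2 = 2*s by omega, show 2*(s+1)-1 = 2*s+1 by omega,
          ap_even, ap_odd]
        push_cast; ring
      · rw [if_neg (by omega)]
        obtain rfl : t = 0 := by omega
        push_cast; ring
    · obtain rfl : t = n := by omega
      rw [if_neg (by omega), if_pos (by omega)]
      obtain ⟨s, rfl⟩ : ∃ s, t = s + 1 := ⟨t-1, by omega⟩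
      rw [show 2*(s+1)-2 = 2*s by omega, show 2*(s+1)-1 = 2*s+1 by omega, ap_even, ap_odd]
      push_cast; ring
  · by_cases h1 : t + 2 ≤ n
    · rw [if_pos (by omega), ap_odd, show 2*t+1+1 = 2*(t+1) by ring, ap_even]
      by_cases h2 : 1 ≤ t
      · obtain ⟨s, rfl⟩ : ∃ s, t = s + 1 := ⟨t-1, by omega⟩
        rw [if_pos (by omega), show 2*(s+1)+1-2 = 2*s+1 by omega,
          show 2*(s+1)+1-1 = 2*(s+1) by omega, ap_odd, ap_even]
        push_cast; ring
      · rw [if_neg (by omega)]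
        obtain rfl : t = 0 := by omega
        push_cast; ring
    · obtain rfl : n = t + 1 := by omega
      rw [if_neg (by omega)]
      by_cases h2 : 1 ≤ t
      · obtain ⟨s, rfl⟩ : ∃ s, t = s + 1 := ⟨t-1, by omega⟩
        rw [if_pos (by omega), show 2*(s+1)+1-2 = 2*s+1 by omega,
          show 2*(s+1)+1-1 = 2*(s+1) by omega, ap_odd, ap_even]
        push_cast; ring
      · rw [if_neg (by omega)]
        obtain rfl : t = 0 := by omega
        push_cast; ring

lemma key4 (n i : ℕ) (hi : i + 1 ≤ 2*n) :
    (if 1 ≤ i then ap n (i-1) * ap n i else 0)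
      - (if i + 2 ≤ 2*n then ap n i * ap n (i+1) else 0) = ap n i := by
  rcases Nat.even_or_odd i with ⟨t, rfl⟩ | ⟨t, rfl⟩
  · have ht : t + t = 2 * t := by ring
    rw [ht]
    by_cases h2 : 1 ≤ t
    · obtain ⟨s, rfl⟩ : ∃ s, t = s + 1 := ⟨t-1, by omega⟩
      rw [if_pos (by omega), if_pos (by omega), show 2*(s+1)-1 = 2*s+1 by omega,
        ap_odd, ap_even, ap_odd]
      push_cast; ring
    · obtain rfl : t = 0 := by omega
      rw [if_neg (by omega), if_pos (by omega), ap_odd, ap_even]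
      push_cast; ring
  · rw [if_pos (by omega), show 2*t+1-1 = 2*t by omega, ap_even, ap_odd,
      show 2*t+1+1 = 2*(t+1) by ring, ap_even]
    by_cases h1 : t + 2 ≤ n
    · rw [if_pos (by omega)]
      push_cast; ring
    · obtain rfl : n = t + 1 := by omega
      rw [if_neg (by omega)]
      push_cast; ring

lemma key5 (n i : ℕ) (h1 : 1 ≤ i) (hi : i ≤ 2*n) :
    (if i + 1 ≤ 2*n then ap n i else 0) - (if 2 ≤ i then ap n (i-2) else 0) = -1 := by
  rcases Nat.even_or_odd i with ⟨t, rfl⟩ | ⟨t, rfl⟩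
  · have ht : t + t = 2 * t := by ring
    rw [ht]
    obtain ⟨s, rfl⟩ : ∃ s, t = s + 1 := ⟨t-1, by omega⟩
    rw [if_pos (show 2 ≤ 2*(s+1) by omega), show 2*(s+1)-2 = 2*s by omega, ap_even]
    by_cases h2 : s + 2 ≤ n
    · rw [if_pos (by omega), ap_even]
      push_cast; ring
    · obtain rfl : n = s + 1 := by omega
      rw [if_neg (by omega), ap_even]
      push_cast; ring
  · rw [if_pos (by omega), ap_odd]
    by_cases h2 : 1 ≤ t
    · obtain ⟨s, rfl⟩ : ∃ s, t = s + 1 := ⟨t-1, by omega⟩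
      rw [if_pos (by omega), show 2*(s+1)+1-2 = 2*s+1 by omega, ap_odd]
      push_cast; ring
    · obtain rfl : t = 0 := by omega
      rw [if_neg (by omega)]
      push_cast; ring

lemma Hmat_apply (n : ℕ) (i j : Fin (2*n+1)) :
    Hmat n i j = if i = j then (n : ℚ) - (i : ℕ) else 0 := rfl

/-- With X_± = J_±², the relations [H, X_±] = ±2X_±, [X₊, X₋] = -H,
[J₋, X₊] = J₊ and [J₊, X₋] = -J₋ hold. -/
theorem osp12_bosonic_relations (n : ℕ) (hn : 1 ≤ n) :
    Hmat n * (Jplus n) ^ 2 - (Jplus n) ^ 2 * Hmat n = (2 : ℚ) • (Jplus n) ^ 2 ∧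
    Hmat n * (Jminus n) ^ 2 - (Jminus n) ^ 2 * Hmat n = -((2 : ℚ) • (Jminus n) ^ 2) ∧
    (Jplus n) ^ 2 * (Jminus n) ^ 2 - (Jminus n) ^ 2 * (Jplus n) ^ 2 = -Hmat n ∧
    Jminus n * (Jplus n) ^ 2 - (Jplus n) ^ 2 * Jminus n = Jplus n ∧
    Jplus n * (Jminus n) ^ 2 - (Jminus n) ^ 2 * Jplus n = -Jminus n := by
  refine ⟨?_, ?_, ?_, ?_, ?_⟩
  · ext i j
    rw [Matrix.sub_apply, Matrix.smul_apply, smul_eq_mul, Hmat_eq, diagonal_mul, mul_diagonal, Xp_apply]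
    split_ifs with h
    · have hj : ((j:ℕ) : ℚ) = ((i:ℕ) : ℚ) + 2 := by exact_mod_cast h
      rw [hj]; ring
    · ring
  · ext i j
    rw [Matrix.sub_apply, Matrix.neg_apply, Matrix.smul_apply, smul_eq_mul, Hmat_eq, diagonal_mul, mul_diagonal,
      Xm_apply]
    split_ifs with h
    · have hij : ((i:ℕ) : ℚ) = ((j:ℕ) : ℚ) + 2 := by exact_mod_cast h
      rw [hij]; ring
    · ring
  · ext i j
    rw [Matrix.sub_apply, Matrix.neg_apply, XpXm_apply, XmXp_apply, Hmat_apply]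
    by_cases hij : i = j
    · subst hij
      rw [if_pos rfl]
      simp only [eq_self_iff_true, true_and]
      have h3 := key3 n (i:ℕ) hn (by have := i.isLt; omega)
      split_ifs at h3 ⊢ <;> linarith
    · rw [if_neg hij, if_neg (fun hc => hij (Fin.ext hc.1)), if_neg (fun hc => hij (Fin.ext hc.1))]
      ring
  · ext i j
    rw [Matrix.sub_apply, JmXp_apply, XpJm_apply, Jplus_apply]
    by_cases h : (j:ℕ) = (i:ℕ) + 1
    · rw [if_pos h]
      simp only [h, eq_self_iff_true, true_and]
      have h4 := key4 n (i:ℕ) (by have := j.isLt; omega)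
      split_ifs at h4 ⊢ <;> linarith
    · rw [if_neg h, if_neg (fun hc => h hc.1), if_neg (fun hc => h hc.1)]
      ring
  · ext i j
    rw [Matrix.sub_apply, Matrix.neg_apply, JpXm_apply, XmJp_apply, Jminus_apply]
    by_cases h : (i:ℕ) = (j:ℕ) + 1
    · rw [if_pos h]
      simp only [h, eq_self_iff_true, true_and]
      have h5 := key5 n ((j:ℕ)+1) (by omega) (by have := i.isLt; omega)
      split_ifs at h5 ⊢ <;> linarith
    · rw [if_neg h, if_neg (fun hc => h hc.1), if_neg (fun hc => h hc.1)]
      ring
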